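/- For any player i ∈ {0,1} and state ω ∈ Ω, the set {p ∈ [0,1] : there exists a p-evident C-indicating event F with P_i(F | ω) ≥ p} has a maximum, and this maximum equals the maximum of the C-evidence levels of the maximally evident C-indicating events E satisfying E ∩ Π_i(ω) ≠ ∅ (the maximal value p such that player i p-believes there is common p-belief in C at ω). -/
import Mathlib


open Finset

variable {Ω : Type*}

/-- The conditional probability `P_i(E | ω) = μ(E ∩ Π_i(ω)) / μ(Π_i(ω))`,
where `part i ω` is the cell of player `i`'s information partition containing `ω`. -/
noncomputable def condP [Fintype Ω] [DecidableEq Ω] (μ : Ω → ℝ)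
    (part : Fin 2 → Ω → Finset Ω) (i : Fin 2) (E : Finset Ω) (ω : Ω) : ℝ :=
  (∑ x ∈ E ∩ part i ω, μ x) / (∑ x ∈ part i ω, μ x)

/-- `E` is `p`-evident: every player `p`-believes `E` at every state of `E`. -/
def pEvident [Fintype Ω] [DecidableEq Ω] (μ : Ω → ℝ)
    (part : Fin 2 → Ω → Finset Ω) (p : ℝ) (E : Finset Ω) : Prop :=
  ∀ i : Fin 2, ∀ ω ∈ E, p ≤ condP μ part i E ω

/-- `E` is a `p`-evident `C`-indicating event. -/
def pEvidentInd [Fintype Ω] [DecidableEq Ω] (μ : Ω → ℝ)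
    (part : Fin 2 → Ω → Finset Ω) (p : ℝ) (C E : Finset Ω) : Prop :=
  pEvident μ part p E ∧ ∀ i : Fin 2, ∀ ω ∈ E, p ≤ condP μ part i C ω

/-- `E` is the largest `p`-evident `C`-indicating event. -/
def isLargestInd [Fintype Ω] [DecidableEq Ω] (μ : Ω → ℝ)
    (part : Fin 2 → Ω → Finset Ω) (p : ℝ) (C E : Finset Ω) : Prop :=
  pEvidentInd μ part p C E ∧ ∀ F : Finset Ω, pEvidentInd μ part p C F → F ⊆ E

/-- `p` is the `C`-evidence level of `E`: the maximum `q` for which `E` is a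
`q`-evident `C`-indicating event. -/
def isEvidenceLevel [Fintype Ω] [DecidableEq Ω] (μ : Ω → ℝ)
    (part : Fin 2 → Ω → Finset Ω) (C E : Finset Ω) (p : ℝ) : Prop :=
  IsGreatest {q : ℝ | pEvidentInd μ part q C E} p

/-- `G` is the maximally evident `C`-indicating superset of `F`. -/
def isMaxEvidentSup [Fintype Ω] [DecidableEq Ω] (μ : Ω → ℝ)
    (part : Fin 2 → Ω → Finset Ω) (C F G : Finset Ω) : Prop :=
  F ⊆ G ∧ ∃ p : ℝ, isEvidenceLevel μ part C G p ∧ isLargestInd μ part p C G ∧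
    ∀ H : Finset Ω, F ⊆ H → ∀ q : ℝ, isEvidenceLevel μ part C H q → q ≤ p

/-- `E` is a maximally evident `C`-indicating event: it is the maximally evident
`C`-indicating superset of some nonempty event. -/
def isMaxEvident [Fintype Ω] [DecidableEq Ω] (μ : Ω → ℝ)
    (part : Fin 2 → Ω → Finset Ω) (C E : Finset Ω) : Prop :=
  ∃ F : Finset Ω, F.Nonempty ∧ isMaxEvidentSup μ part C F E

/-- `E` is a super-`p`-evident `C`-indicating event. -/
def superEvidentInd [Fintype Ω] [DecidableEq Ω] (μ : Ω → ℝ)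
    (part : Fin 2 → Ω → Finset Ω) (p : ℝ) (C E : Finset Ω) : Prop :=
  ∀ i : Fin 2, ∀ ω ∈ E, p < condP μ part i E ω ∧ p < condP μ part i C ω

/-- `E` is the largest super-evident `C`-indicating subset of `F`. -/
def isLargestSuperSub [Fintype Ω] [DecidableEq Ω] (μ : Ω → ℝ)
    (part : Fin 2 → Ω → Finset Ω) (C F E : Finset Ω) : Prop :=
  E ⊆ F ∧ ∃ p : ℝ, isEvidenceLevel μ part C F p ∧ superEvidentInd μ part p C E ∧
    ∀ G : Finset Ω, G ⊆ F → superEvidentInd μ part p C G → G ⊆ E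

-- AUX START
open scoped Classical

section Aux
variable [Fintype Ω] [DecidableEq Ω]

lemma cellsum_pos (μ : Ω → ℝ) (part : Fin 2 → Ω → Finset Ω)
    (hμpos : ∀ ω : Ω, 0 < μ ω) (hmem : ∀ (i : Fin 2) (ω : Ω), ω ∈ part i ω)
    (i : Fin 2) (ω : Ω) : 0 < ∑ x ∈ part i ω, μ x :=
  Finset.sum_pos (fun x _ => hμpos x) ⟨ω, hmem i ω⟩

lemma condP_nonneg (μ : Ω → ℝ) (part : Fin 2 → Ω → Finset Ω)
    (hμpos : ∀ ω : Ω, 0 < μ ω) (i : Fin 2) (E : Finset Ω) (ω : Ω) :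
    0 ≤ condP μ part i E ω :=
  div_nonneg (Finset.sum_nonneg fun x _ => (hμpos x).le)
    (Finset.sum_nonneg fun x _ => (hμpos x).le)

lemma condP_le_one (μ : Ω → ℝ) (part : Fin 2 → Ω → Finset Ω)
    (hμpos : ∀ ω : Ω, 0 < μ ω) (hmem : ∀ (i : Fin 2) (ω : Ω), ω ∈ part i ω)
    (i : Fin 2) (E : Finset Ω) (ω : Ω) : condP μ part i E ω ≤ 1 := by
  rw [condP, div_le_one (cellsum_pos μ part hμpos hmem i ω)]
  exact Finset.sum_le_sum_of_subset_of_nonneg (inter_subset_right)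
    (fun x _ _ => (hμpos x).le)

lemma condP_mono (μ : Ω → ℝ) (part : Fin 2 → Ω → Finset Ω)
    (hμpos : ∀ ω : Ω, 0 < μ ω) (hmem : ∀ (i : Fin 2) (ω : Ω), ω ∈ part i ω)
    (i : Fin 2) {E F : Finset Ω} (hEF : E ⊆ F) (ω : Ω) :
    condP μ part i E ω ≤ condP μ part i F ω := by
  rw [condP, condP, div_le_div_iff_of_pos_right (cellsum_pos μ part hμpos hmem i ω)]
  exact Finset.sum_le_sum_of_subset_of_nonneg (inter_subset_inter hEF Subset.rfl)
    (fun x _ _ => (hμpos x).le)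

lemma condP_congr_cell (μ : Ω → ℝ) (part : Fin 2 → Ω → Finset Ω)
    (hcell : ∀ (i : Fin 2) (ω ω' : Ω), ω' ∈ part i ω → part i ω' = part i ω)
    (i : Fin 2) (E : Finset Ω) {ω ω' : Ω} (h : ω' ∈ part i ω) :
    condP μ part i E ω' = condP μ part i E ω := by
  rw [condP, condP, hcell i ω ω' h]

/-- The finite set of all "evidence values" of `E`. -/
noncomputable def sVals (μ : Ω → ℝ) (part : Fin 2 → Ω → Finset Ω)
    (C E : Finset Ω) : Finset ℝ :=
  (Finset.univ ×ˢ E).image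
    (fun x : Fin 2 × Ω => min (condP μ part x.1 E x.2) (condP μ part x.1 C x.2))

lemma mem_sVals (μ : Ω → ℝ) (part : Fin 2 → Ω → Finset Ω)
    (C E : Finset Ω) (r : ℝ) :
    r ∈ sVals μ part C E ↔ ∃ j : Fin 2, ∃ x ∈ E,
      r = min (condP μ part j E x) (condP μ part j C x) := by
  simp only [sVals, mem_image, mem_product, mem_univ, true_and, Prod.exists]
  constructor
  · rintro ⟨j, x, hx, rfl⟩; exact ⟨j, x, hx, rfl⟩
  · rintro ⟨j, x, hx, rfl⟩; exact ⟨j, x, hx, rfl⟩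

lemma pEvidentInd_iff (μ : Ω → ℝ) (part : Fin 2 → Ω → Finset Ω)
    (C E : Finset Ω) (p : ℝ) :
    pEvidentInd μ part p C E ↔ ∀ r ∈ sVals μ part C E, p ≤ r := by
  constructor
  · rintro ⟨h1, h2⟩ r hr
    obtain ⟨j, x, hx, rfl⟩ := (mem_sVals μ part C E r).mp hr
    exact le_min (h1 j x hx) (h2 j x hx)
  · intro h
    constructor
    · intro j x hx
      exact (h _ ((mem_sVals μ part C E _).mpr ⟨j, x, hx, rfl⟩)).trans
        (min_le_left _ _)
    · intro j x hx
      exact (h _ ((mem_sVals μ part C E _).mpr ⟨j, x, hx, rfl⟩)).trans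
        (min_le_right _ _)

lemma sVals_nonempty (μ : Ω → ℝ) (part : Fin 2 → Ω → Finset Ω)
    (C : Finset Ω) {E : Finset Ω} (hE : E.Nonempty) :
    (sVals μ part C E).Nonempty :=
  (Finset.Nonempty.product ⟨0, mem_univ _⟩ hE).image _

/-- The evidence level of `E` (meaningful for nonempty `E`). -/
noncomputable def lvlD (μ : Ω → ℝ) (part : Fin 2 → Ω → Finset Ω)
    (C E : Finset Ω) : ℝ :=
  if h : (sVals μ part C E).Nonempty then (sVals μ part C E).min' h else 0

lemma lvlD_evLevel (μ : Ω → ℝ) (part : Fin 2 → Ω → Finset Ω)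
    (C : Finset Ω) {E : Finset Ω} (hE : E.Nonempty) :
    isEvidenceLevel μ part C E (lvlD μ part C E) := by
  have hne := sVals_nonempty μ part C hE
  rw [lvlD, dif_pos hne]
  constructor
  · exact (pEvidentInd_iff μ part C E _).mpr (fun r hr => min'_le _ _ hr)
  · intro q hq
    exact (pEvidentInd_iff μ part C E q).mp hq _ (min'_mem _ hne)

lemma evLevel_unique (μ : Ω → ℝ) (part : Fin 2 → Ω → Finset Ω)
    (C : Finset Ω) {E : Finset Ω} (hE : E.Nonempty) {q : ℝ}
    (hq : isEvidenceLevel μ part C E q) : q = lvlD μ part C E :=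
  hq.unique (lvlD_evLevel μ part C hE)

lemma lvlD_nonneg (μ : Ω → ℝ) (part : Fin 2 → Ω → Finset Ω)
    (hμpos : ∀ ω : Ω, 0 < μ ω)
    (C : Finset Ω) {E : Finset Ω} (hE : E.Nonempty) :
    0 ≤ lvlD μ part C E := by
  have hne := sVals_nonempty μ part C hE
  rw [lvlD, dif_pos hne]
  obtain ⟨j, x, -, h⟩ := (mem_sVals μ part C E _).mp (min'_mem _ hne)
  rw [h]
  exact le_min (condP_nonneg μ part hμpos _ _ _) (condP_nonneg μ part hμpos _ _ _)

/-- The largest `p`-evident `C`-indicating event. -/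
noncomputable def bigE (μ : Ω → ℝ) (part : Fin 2 → Ω → Finset Ω)
    (C : Finset Ω) (p : ℝ) : Finset Ω :=
  (Finset.univ.powerset.filter (fun F => pEvidentInd μ part p C F)).sup id

lemma subset_bigE (μ : Ω → ℝ) (part : Fin 2 → Ω → Finset Ω)
    (C : Finset Ω) (p : ℝ) {F : Finset Ω} (hF : pEvidentInd μ part p C F) :
    F ⊆ bigE μ part C p :=
  le_sup (f := id) (mem_filter.mpr ⟨mem_powerset.mpr (subset_univ F), hF⟩)

lemma pEvidentInd_bigE (μ : Ω → ℝ) (part : Fin 2 → Ω → Finset Ω)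
    (hμpos : ∀ ω : Ω, 0 < μ ω) (hmem : ∀ (i : Fin 2) (ω : Ω), ω ∈ part i ω)
    (C : Finset Ω) (p : ℝ) : pEvidentInd μ part p C (bigE μ part C p) := by
  constructor
  · intro j x hx
    obtain ⟨G, hG, hxG⟩ := Finset.mem_sup.mp hx
    have hGE : G ⊆ bigE μ part C p := le_sup (f := id) hG
    have := (mem_filter.mp hG).2.1 j x hxG
    exact this.trans (condP_mono μ part hμpos hmem j hGE x)
  · intro j x hx
    obtain ⟨G, hG, hxG⟩ := Finset.mem_sup.mp hx
    exact (mem_filter.mp hG).2.2 j x hxG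

/-- min of evidence values of `F` together with `condP i F ω`. -/
noncomputable def vF (μ : Ω → ℝ) (part : Fin 2 → Ω → Finset Ω)
    (C : Finset Ω) (i : Fin 2) (ω : Ω) (F : Finset Ω) : ℝ :=
  (insert (condP μ part i F ω) (sVals μ part C F)).min' (insert_nonempty _ _)

lemma le_vF_iff (μ : Ω → ℝ) (part : Fin 2 → Ω → Finset Ω)
    (C : Finset Ω) (i : Fin 2) (ω : Ω) (F : Finset Ω) (p : ℝ) :
    p ≤ vF μ part C i ω F ↔
      pEvidentInd μ part p C F ∧ p ≤ condP μ part i F ω := by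
  rw [pEvidentInd_iff]
  constructor
  · intro h
    exact ⟨fun r hr => h.trans (min'_le _ _ (mem_insert_of_mem hr)),
      h.trans (min'_le _ _ (mem_insert_self _ _))⟩
  · rintro ⟨h1, h2⟩
    apply le_min'
    intro r hr
    rcases mem_insert.mp hr with rfl | hr
    · exact h2
    · exact h1 r hr

lemma vF_le_lvlD (μ : Ω → ℝ) (part : Fin 2 → Ω → Finset Ω)
    (C : Finset Ω) (i : Fin 2) (ω : Ω) {F : Finset Ω} (hF : F.Nonempty) :
    vF μ part C i ω F ≤ lvlD μ part C F := by
  have hne := sVals_nonempty μ part C hF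
  rw [lvlD, dif_pos hne]
  exact le_min' _ _ _ fun r hr => min'_le _ _ (mem_insert_of_mem hr)

end Aux
/-- The set of `p ∈ [0,1]` such that player `i` `p`-believes some `p`-evident
`C`-indicating event at `ω` has a maximum, and this maximum equals the maximum of the
`C`-evidence levels of the maximally evident `C`-indicating events meeting the cell of
`ω`. -/
theorem maximal_perceived_common_pBelief [Fintype Ω] [DecidableEq Ω] [Nonempty Ω]
    (μ : Ω → ℝ) (part : Fin 2 → Ω → Finset Ω)
    (hμpos : ∀ ω : Ω, 0 < μ ω) (hμsum : ∑ ω : Ω, μ ω = 1)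
    (hmem : ∀ (i : Fin 2) (ω : Ω), ω ∈ part i ω)
    (hcell : ∀ (i : Fin 2) (ω ω' : Ω), ω' ∈ part i ω → part i ω' = part i ω)
    (C : Finset Ω) (i : Fin 2) (ω : Ω) :
    ∃ m : ℝ,
      IsGreatest {p : ℝ | p ∈ Set.Icc (0 : ℝ) 1 ∧
        ∃ F : Finset Ω, pEvidentInd μ part p C F ∧ p ≤ condP μ part i F ω} m ∧
      IsGreatest {q : ℝ | ∃ E : Finset Ω, isMaxEvident μ part C E ∧
        (E ∩ part i ω).Nonempty ∧ isEvidenceLevel μ part C E q} m := by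
  classical
  set V : Finset ℝ := Finset.univ.powerset.image (vF μ part C i ω) with hVdef
  have hVne : V.Nonempty :=
    ⟨_, mem_image_of_mem _ (mem_powerset.mpr (empty_subset Finset.univ))⟩
  set M : ℝ := V.max' hVne with hMdef
  have hvle : ∀ F : Finset Ω, vF μ part C i ω F ≤ M := fun F =>
    le_max' _ _ (mem_image_of_mem _ (mem_powerset.mpr (subset_univ F)))
  -- vF of the empty set is 0
  have hv0 : vF μ part C i ω (∅ : Finset Ω) = 0 := by
    have hs : sVals μ part C (∅ : Finset Ω) = ∅ := by
      simp [sVals]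
    have hc0 : condP μ part i (∅ : Finset Ω) ω = 0 := by
      simp [condP]
    refine le_antisymm (hc0 ▸ min'_le _ _ (mem_insert_self _ _)) (le_min' _ _ _ ?_)
    intro r hr
    rcases mem_insert.mp hr with rfl | hr
    · exact hc0.ge
    · rw [hs] at hr
      exact absurd hr (notMem_empty r)
  have hM0 : 0 ≤ M := hv0 ▸ hvle ∅
  -- the maximizer F₁
  obtain ⟨F₁, -, hF₁⟩ := mem_image.mp (max'_mem V hVne)
  have hMeqv : M = vF μ part C i ω F₁ := hF₁.symm
  have hMF₁ : pEvidentInd μ part M C F₁ ∧ M ≤ condP μ part i F₁ ω :=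
    (le_vF_iff μ part C i ω F₁ M).mp (le_of_eq hMeqv)
  have hM1 : M ≤ 1 := hMF₁.2.trans (condP_le_one μ part hμpos hmem i F₁ ω)
  -- upper-bound principle for evidence levels of events meeting the cell of ω
  have hub : ∀ q : ℝ, ∀ E : Finset Ω, pEvidentInd μ part q C E →
      (E ∩ part i ω).Nonempty → q ≤ M := by
    intro q E hq ⟨ω', hω'⟩
    have hω'E : ω' ∈ E := (mem_inter.mp hω').1
    have hω'c : ω' ∈ part i ω := (mem_inter.mp hω').2
    have h1 : q ≤ condP μ part i E ω' := hq.1 i ω' hω'E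
    rw [condP_congr_cell μ part hcell i E hω'c] at h1
    exact ((le_vF_iff μ part C i ω E q).mpr ⟨hq, h1⟩).trans (hvle E)
  -- generic construction of a maximally evident event above a nonempty F₀ ⊆ Π_i(ω)
  have construct : ∀ F₀ : Finset Ω, F₀.Nonempty → F₀ ⊆ part i ω →
      ∃ (E : Finset Ω) (p : ℝ), isMaxEvident μ part C E ∧
        (E ∩ part i ω).Nonempty ∧ isEvidenceLevel μ part C E p ∧ p ≤ M ∧
        ∀ H : Finset Ω, F₀ ⊆ H → ∀ r : ℝ, isEvidenceLevel μ part C H r → r ≤ p := by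
    intro F₀ hF₀ne hF₀cell
    set T : Finset (Finset Ω) := Finset.univ.powerset.filter (fun H => F₀ ⊆ H)
      with hTdef
    have hmemT : ∀ H : Finset Ω, F₀ ⊆ H → H ∈ T := fun H hH =>
      mem_filter.mpr ⟨mem_powerset.mpr (subset_univ H), hH⟩
    have hTne : (T.image (lvlD μ part C)).Nonempty :=
      ⟨_, mem_image_of_mem _ (hmemT F₀ Subset.rfl)⟩
    obtain ⟨Hh, hHhT, hHh⟩ := mem_image.mp (max'_mem _ hTne)
    set p : ℝ := lvlD μ part C Hh with hpdef
    have hple : ∀ H : Finset Ω, F₀ ⊆ H → lvlD μ part C H ≤ p := by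
      intro H hH
      calc lvlD μ part C H ≤ (T.image (lvlD μ part C)).max' hTne :=
            le_max' _ _ (mem_image_of_mem _ (hmemT H hH))
        _ = p := hHh.symm
    have hHhF₀ : F₀ ⊆ Hh := (mem_filter.mp hHhT).2
    have hHhne : Hh.Nonempty := hF₀ne.mono hHhF₀
    have hHhEv : pEvidentInd μ part p C Hh := (lvlD_evLevel μ part C hHhne).1
    set E : Finset Ω := bigE μ part C p with hEdef
    have hHhE : Hh ⊆ E := subset_bigE μ part C p hHhEv
    have hF₀E : F₀ ⊆ E := hHhF₀.trans hHhE
    have hEne : E.Nonempty := hF₀ne.mono hF₀E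
    have hEEv : pEvidentInd μ part p C E := pEvidentInd_bigE μ part hμpos hmem C p
    have hlevE : isEvidenceLevel μ part C E p := by
      refine ⟨hEEv, fun q hq => ?_⟩
      have h1 : q ≤ lvlD μ part C E := (lvlD_evLevel μ part C hEne).2 hq
      exact h1.trans (hple E hF₀E)
    have hbound : ∀ H : Finset Ω, F₀ ⊆ H → ∀ r : ℝ,
        isEvidenceLevel μ part C H r → r ≤ p := by
      intro H hH r hr
      rw [evLevel_unique μ part C (hF₀ne.mono hH) hr]
      exact hple H hH
    have hEcell : (E ∩ part i ω).Nonempty := by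
      obtain ⟨x, hx⟩ := hF₀ne
      exact ⟨x, mem_inter.mpr ⟨hF₀E hx, hF₀cell hx⟩⟩
    refine ⟨E, p, ⟨F₀, hF₀ne, hF₀E, p, hlevE,
      ⟨hEEv, fun F hF => subset_bigE μ part C p hF⟩, hbound⟩, hEcell, hlevE,
      hub p E hEEv hEcell, hbound⟩
  -- produce the witness event for the second set, with evidence level exactly M
  have hBmem : ∃ E : Finset Ω, isMaxEvident μ part C E ∧
      (E ∩ part i ω).Nonempty ∧ isEvidenceLevel μ part C E M := by
    by_cases hc : (F₁ ∩ part i ω).Nonempty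
    · obtain ⟨E, p, hmax, hEcell, hlev, hpM, hbd⟩ :=
        construct (F₁ ∩ part i ω) hc inter_subset_right
      have hF₁ne : F₁.Nonempty := by
        obtain ⟨x, hx⟩ := hc
        exact ⟨x, (mem_inter.mp hx).1⟩
      have hMp : M ≤ p := by
        have h1 : lvlD μ part C F₁ ≤ p :=
          hbd F₁ inter_subset_left _ (lvlD_evLevel μ part C hF₁ne)
        have h2 : M ≤ lvlD μ part C F₁ :=
          hMeqv.le.trans (vF_le_lvlD μ part C i ω hF₁ne)
        exact h2.trans h1
      have : p = M := le_antisymm hpM hMp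
      exact ⟨E, hmax, hEcell, this ▸ hlev⟩
    · -- then condP μ part i F₁ ω = 0, so M = 0
      have hint : F₁ ∩ part i ω = ∅ := not_nonempty_iff_eq_empty.mp hc
      have hc0 : condP μ part i F₁ ω = 0 := by
        rw [condP, hint]
        simp
      have hMz : M = 0 := le_antisymm (by rw [← hc0]; exact hMF₁.2) hM0
      obtain ⟨E, p, hmax, hEcell, hlev, hpM, hbd⟩ :=
        construct {ω} (singleton_nonempty ω) (singleton_subset_iff.mpr (hmem i ω))
      have hMp : M ≤ p := by
        rw [hMz]
        have h1 : lvlD μ part C (Finset.univ : Finset Ω) ≤ p :=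
          hbd _ (subset_univ _) _ (lvlD_evLevel μ part C univ_nonempty)
        exact (lvlD_nonneg μ part hμpos C univ_nonempty).trans h1
      have : p = M := le_antisymm hpM hMp
      exact ⟨E, hmax, hEcell, this ▸ hlev⟩
  refine ⟨M, ⟨⟨⟨hM0, hM1⟩, F₁, hMF₁.1, hMF₁.2⟩, ?_⟩, ⟨hBmem, ?_⟩⟩
  · rintro q ⟨-, F, hF, hle⟩
    exact ((le_vF_iff μ part C i ω F q).mpr ⟨hF, hle⟩).trans (hvle F)
  · rintro q ⟨E, -, hEcell, hlev⟩
    exact hub q E hlev.1 hEcell
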